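/- Let F satisfy Assumption 2 and a > 0, and let b_F and g be the unique constant and the unique differentiable solution on ℝ of g'(x) = a·x² − b_F − F(g(x)) with x·g(x) ≤ 0 for all x ∈ ℝ. Then g is odd (g(−x) = −g(x) for all x), g is decreasing on ℝ, and g satisfies the growth conditions lim_{x→−∞} g(x)/F⁻¹(a·x²) = 1 and lim_{x→+∞} g(x)/F⁻¹(a·x²) = −1. -/

import Mathlib

/-- Assumption 2 on the function `F`. -/
structure Assumption2 (F : ℝ → ℝ) : Prop where
  convex : ConvexOn ℝ Set.univ F
  diff : Differentiable ℝ F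
  even : ∀ x : ℝ, F (-x) = F x
  strictMonoOn : StrictMonoOn F (Set.Ici 0)
  map_zero : F 0 = 0
  deriv_diffOn : ∀ x ∈ Set.Ici (0 : ℝ), DifferentiableAt ℝ (deriv F) x
  deriv_strictMonoOn : StrictMonoOn (deriv F) (Set.Ici 0)
  deriv_zero : deriv F 0 = 0
  growth : ∃ K > (0 : ℝ), ∃ p : ℝ, 2 ≤ p ∧ ∀ x : ℝ, F x ≤ K * (1 + |x| ^ p)
  second_deriv_lb : ∃ C > (0 : ℝ), ∃ x₀ > (0 : ℝ), ∀ x : ℝ, x₀ < |x| → C < deriv (deriv F) x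

/-- `Finv` is the inverse of the restriction of `F` to `[0, ∞)`
(a strictly increasing bijection of `[0, ∞)` onto itself). -/
def IsInvOn (F Finv : ℝ → ℝ) : Prop :=
  (∀ x : ℝ, 0 ≤ x → Finv (F x) = x) ∧ ∀ y : ℝ, 0 ≤ y → 0 ≤ Finv y ∧ F (Finv y) = y

namespace Aux12

variable {F : ℝ → ℝ}

/-- deriv F is odd. -/
lemma derivF_odd (hF : Assumption2 F) (x : ℝ) : deriv F (-x) = -deriv F x := by
  have h : deriv (fun y => F (-y)) x = -deriv F (-x) := deriv_comp_neg F x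
  have h2 : (fun y => F (-y)) = F := funext hF.even
  rw [h2] at h
  linarith

lemma derivF_nonneg (hF : Assumption2 F) {x : ℝ} (hx : 0 ≤ x) : 0 ≤ deriv F x := by
  rcases eq_or_lt_of_le hx with h | h
  · rw [← h, hF.deriv_zero]
  · have := hF.deriv_strictMonoOn (Set.self_mem_Ici) (le_of_lt h : (0:ℝ) ≤ x) h
    rw [hF.deriv_zero] at this; linarith

lemma derivF_nonpos (hF : Assumption2 F) {x : ℝ} (hx : x ≤ 0) : deriv F x ≤ 0 := by
  have := derivF_nonneg hF (neg_nonneg.2 hx)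
  rw [← neg_neg x, derivF_odd hF]; linarith

lemma F_nonneg (hF : Assumption2 F) (x : ℝ) : 0 ≤ F x := by
  rcases le_total 0 x with h | h
  · rcases eq_or_lt_of_le h with h' | h'
    · rw [← h', hF.map_zero]
    · have := hF.strictMonoOn Set.self_mem_Ici h h'
      rw [hF.map_zero] at this; linarith
  · rw [← hF.even]
    rcases eq_or_lt_of_le (neg_nonneg.2 h) with h' | h'
    · rw [← h', hF.map_zero]
    · have := hF.strictMonoOn Set.self_mem_Ici (neg_nonneg.2 h) h'
      rw [hF.map_zero] at this; linarith

lemma F_monoOn (hF : Assumption2 F) : MonotoneOn F (Set.Ici 0) := hF.strictMonoOn.monotoneOn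

/-- bound on |deriv F| on [-R,R] -/
lemma derivF_abs_le (hF : Assumption2 F) {R y : ℝ} (hR : 0 ≤ R) (hy : |y| ≤ R) :
    |deriv F y| ≤ deriv F R := by
  have hmono := hF.deriv_strictMonoOn.monotoneOn
  rcases le_total 0 y with h | h
  · rw [abs_of_nonneg (derivF_nonneg hF h)]
    exact hmono h hR (le_trans (le_abs_self y) hy)
  · have h1 : deriv F y ≤ 0 := derivF_nonpos hF h
    rw [abs_of_nonpos h1, ← derivF_odd hF]
    exact hmono (neg_nonneg.2 h) hR (le_trans (neg_le_abs y) hy)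

/-- F is Lipschitz on [-R,R] with constant deriv F R. -/
lemma F_lip (hF : Assumption2 F) {R y z : ℝ} (hR : 0 ≤ R) (hy : |y| ≤ R) (hz : |z| ≤ R) :
    |F y - F z| ≤ deriv F R * |y - z| := by
  have hconv : Convex ℝ (Set.Icc (-R) R) := convex_Icc _ _
  have hd : ∀ w ∈ Set.Icc (-R) R, ‖deriv F w‖ ≤ deriv F R := by
    intro w hw
    exact derivF_abs_le hF hR (abs_le.2 ⟨hw.1, hw.2⟩)
  have := hconv.norm_image_sub_le_of_norm_deriv_le
    (fun w _ => hF.diff w) hd (Set.mem_Icc.2 (abs_le.1 hz)) (Set.mem_Icc.2 (abs_le.1 hy))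
  simpa [Real.norm_eq_abs] using this

end Aux12

namespace Aux12
variable {F : ℝ → ℝ}

lemma F_superadd (hF : Assumption2 F) {s t : ℝ} (hs : 0 ≤ s) (ht : 0 ≤ t) :
    F s + F t ≤ F (s + t) := by
  rcases eq_or_lt_of_le (add_nonneg hs ht) with h | h
  · have hs0 : s = 0 := by linarith
    have ht0 : t = 0 := by linarith
    simp [hs0, ht0, hF.map_zero]
  · set c := s + t with hc
    have key : ∀ u : ℝ, 0 ≤ u → u ≤ c → F u ≤ (u / c) * F c := by
      intro u hu huc
      have h1 : F ((u/c) • c + (1 - u/c) • (0:ℝ)) ≤ (u/c) • F c + (1 - u/c) • F 0 :=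
        hF.convex.2 (Set.mem_univ c) (Set.mem_univ 0) (by positivity)
          (by rw [sub_nonneg]; exact div_le_one_of_le₀ huc h.le)
          (by ring)
      rw [hF.map_zero] at h1
      simp only [smul_eq_mul, mul_zero, add_zero] at h1
      rw [div_mul_cancel₀ _ h.ne'] at h1
      exact h1
    have h1 := key s hs (by linarith)
    have h2 := key t ht (by linarith)
    have : (s / c) * F c + (t / c) * F c = F c := by
      field_simp
      rw [hc]; ring
    linarith

lemma F_scale (hF : Assumption2 F) {y l : ℝ} (hy : 0 ≤ y) (hl : 1 ≤ l) :
    l * F y ≤ F (l * y) := by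
  have hl0 : 0 < l := lt_of_lt_of_le one_pos hl
  have h1 : F ((1/l) • (l * y) + (1 - 1/l) • (0:ℝ)) ≤ (1/l) • F (l * y) + (1 - 1/l) • F 0 :=
    hF.convex.2 (Set.mem_univ _) (Set.mem_univ 0) (by positivity)
      (by rw [sub_nonneg]; exact div_le_one_of_le₀ hl hl0.le) (by ring)
  rw [hF.map_zero] at h1
  simp only [smul_eq_mul, mul_zero, add_zero] at h1
  have h2 : (1/l) * (l * y) = y := by field_simp
  rw [h2] at h1
  have h3 : l * ((1/l) * F (l * y)) = F (l * y) := by field_simp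
  nlinarith [mul_le_mul_of_nonneg_left h1 hl0.le]

lemma F_quad_lb (hF : Assumption2 F) :
    ∃ κ > (0:ℝ), ∃ M ≥ (0:ℝ), ∀ y : ℝ, 0 ≤ y → κ * y ^ 2 - M ≤ F y := by
  obtain ⟨C, hC, x₀, hx₀, hlb⟩ := hF.second_deriv_lb
  -- deriv F y ≥ C * (y - x₀) for y ≥ x₀
  have hcont : ContinuousOn (deriv F) (Set.Ici 0) := fun x hx =>
    ((hF.deriv_diffOn x hx).continuousAt).continuousWithinAt
  have step1 : ∀ y : ℝ, x₀ ≤ y → C * (y - x₀) ≤ deriv F y := by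
    intro y hy
    have hmono : MonotoneOn (fun y => deriv F y - C * (y - x₀)) (Set.Ici x₀) := by
      apply monotoneOn_of_deriv_nonneg (convex_Ici x₀)
      · exact ((hcont.mono (Set.Ici_subset_Ici.2 hx₀.le)).sub
          ((continuous_const.mul (continuous_id.sub continuous_const)).continuousOn))
      · intro x hx
        rw [interior_Ici] at hx
        exact ((hF.deriv_diffOn x (le_of_lt (lt_trans hx₀ hx))).sub
          (((differentiable_const C).mul ((differentiable_id).sub (differentiable_const x₀))) x)).differentiableWithinAt
      · intro x hx
        rw [interior_Ici] at hx
        have hd : HasDerivAt (fun y => deriv F y - C * (y - x₀)) (deriv (deriv F) x - C) x := by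
          have h1 : HasDerivAt (deriv F) (deriv (deriv F) x) x :=
            (hF.deriv_diffOn x (le_of_lt (lt_trans hx₀ hx))).hasDerivAt
          have h2 : HasDerivAt (fun y => C * (y - x₀)) C x := by
            simpa using ((hasDerivAt_id x).sub_const x₀).const_mul C
          exact h1.sub h2
        rw [hd.deriv]
        have := hlb x (by rw [abs_of_pos (lt_trans hx₀ hx)]; exact hx)
        linarith
    have := hmono (Set.self_mem_Ici) (Set.mem_Ici.2 hy) hy
    simp only [sub_self, mul_zero, sub_zero] at this
    have h0 : 0 ≤ deriv F x₀ := derivF_nonneg hF hx₀.le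
    linarith
  -- F y ≥ C/4 y² - C x₀² for all y ≥ 0
  refine ⟨C/4, by positivity, C * x₀^2, by positivity, fun y hy => ?_⟩
  rcases le_total y (2*x₀) with h | h
  · have h1 : 0 ≤ F y := F_nonneg hF y
    have hsq : y^2 ≤ (2*x₀)^2 := by nlinarith
    nlinarith [mul_le_mul_of_nonneg_left hsq (by positivity : (0:ℝ) ≤ C/4)]
  · -- use monotonicity of F y - C y²/4 on [2x₀, ∞)
    have hmono : MonotoneOn (fun y => F y - C * y^2 / 4) (Set.Ici (2*x₀)) := by
      apply monotoneOn_of_deriv_nonneg (convex_Ici _)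
      · exact (hF.diff.continuous.continuousOn.sub
          (((continuous_const.mul (continuous_pow 2)).div_const 4).continuousOn))
      · intro x hx
        exact ((hF.diff x).sub
          ((((differentiable_const C).mul (differentiable_pow 2)) x).div_const 4)).differentiableWithinAt
      · intro x hx
        rw [interior_Ici, Set.mem_Ioi] at hx
        have hx' : (0:ℝ) < x := by nlinarith
        have hd : HasDerivAt (fun y => F y - C * y^2 / 4) (deriv F x - C * (2*x) / 4) x := by
          have h1 : HasDerivAt F (deriv F x) x := (hF.diff x).hasDerivAt
          have h2 : HasDerivAt (fun y : ℝ => C * y^2 / 4) (C * (2*x) / 4) x := by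
            have : HasDerivAt (fun y : ℝ => y^2) (2*x) x := by
              simpa using hasDerivAt_pow 2 x
            simpa [mul_comm] using (this.const_mul C).div_const 4
          exact h1.sub h2
        rw [hd.deriv]
        have := step1 x (by linarith)
        nlinarith [mul_nonneg hC.le (by linarith : (0:ℝ) ≤ x/2 - x₀)]
    have := hmono (Set.self_mem_Ici) (Set.mem_Ici.2 h) h
    have hF2 : 0 ≤ F (2*x₀) := F_nonneg hF _
    nlinarith

end Aux12

namespace Aux12
variable {F Finv : ℝ → ℝ}

lemma le_of_F_le (hF : Assumption2 F) {u v : ℝ} (hu : 0 ≤ u) (hv : 0 ≤ v)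
    (h : F u ≤ F v) : u ≤ v := by
  by_contra hc
  push_neg at hc
  exact absurd (hF.strictMonoOn hv hu hc) (not_lt.2 h)

lemma Finv_mono (hF : Assumption2 F) (hI : IsInvOn F Finv) {z w : ℝ}
    (hz : 0 ≤ z) (hzw : z ≤ w) : Finv z ≤ Finv w := by
  obtain ⟨hz1, hz2⟩ := hI.2 z hz
  obtain ⟨hw1, hw2⟩ := hI.2 w (le_trans hz hzw)
  exact le_of_F_le hF hz1 hw1 (by rw [hz2, hw2]; exact hzw)

/-- If `t ≤ F u` with `u, t ≥ 0` then `Finv t ≤ u`. -/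
lemma Finv_le_of_le_F (hF : Assumption2 F) (hI : IsInvOn F Finv) {u t : ℝ}
    (hu : 0 ≤ u) (ht : 0 ≤ t) (h : t ≤ F u) : Finv t ≤ u := by
  obtain ⟨ht1, ht2⟩ := hI.2 t ht
  exact le_of_F_le hF ht1 hu (by rw [ht2]; exact h)

/-- If `F u ≤ t` with `u, t ≥ 0` then `u ≤ Finv t`. -/
lemma le_Finv_of_F_le (hF : Assumption2 F) (hI : IsInvOn F Finv) {u t : ℝ}
    (hu : 0 ≤ u) (ht : 0 ≤ t) (h : F u ≤ t) : u ≤ Finv t := by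
  obtain ⟨ht1, ht2⟩ := hI.2 t ht
  exact le_of_F_le hF hu ht1 (by rw [ht2]; exact h)

lemma Finv_subadd (hF : Assumption2 F) (hI : IsInvOn F Finv) {z w : ℝ}
    (hz : 0 ≤ z) (hw : 0 ≤ w) : Finv (z + w) ≤ Finv z + Finv w := by
  obtain ⟨hz1, hz2⟩ := hI.2 z hz
  obtain ⟨hw1, hw2⟩ := hI.2 w hw
  apply Finv_le_of_le_F hF hI (by linarith) (by linarith)
  calc z + w = F (Finv z) + F (Finv w) := by rw [hz2, hw2]
    _ ≤ F (Finv z + Finv w) := F_superadd hF hz1 hw1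

lemma Finv_scale (hF : Assumption2 F) (hI : IsInvOn F Finv) {z l : ℝ}
    (hz : 0 ≤ z) (hl : 1 ≤ l) : Finv (l * z) ≤ l * Finv z := by
  obtain ⟨hz1, hz2⟩ := hI.2 z hz
  apply Finv_le_of_le_F hF hI (by nlinarith) (by nlinarith)
  calc l * z = l * F (Finv z) := by rw [hz2]
    _ ≤ F (l * Finv z) := F_scale hF hz1 hl

lemma Finv_tendsto_atTop (hF : Assumption2 F) (hI : IsInvOn F Finv) :
    Filter.Tendsto Finv Filter.atTop Filter.atTop := by
  apply Filter.tendsto_atTop_atTop.2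
  intro b
  refine ⟨F (max b 0), fun z hz => ?_⟩
  have h1 : Finv (F (max b 0)) = max b 0 := hI.1 _ (le_max_right b 0)
  calc b ≤ max b 0 := le_max_left b 0
    _ = Finv (F (max b 0)) := h1.symm
    _ ≤ Finv z := Finv_mono hF hI (F_nonneg hF _) hz

end Aux12

namespace Aux12
variable {F Finv : ℝ → ℝ}

section ODE
variable {a bF : ℝ} {g : ℝ → ℝ}

lemma g_nonpos (hsign : ∀ x : ℝ, x * g x ≤ 0) {x : ℝ} (hx : 0 < x) : g x ≤ 0 := by
  nlinarith [hsign x]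

lemma g_nonneg (hsign : ∀ x : ℝ, x * g x ≤ 0) {x : ℝ} (hx : x < 0) : 0 ≤ g x := by
  nlinarith [hsign x]

lemma g_zero (hg : Differentiable ℝ g) (hsign : ∀ x : ℝ, x * g x ≤ 0) : g 0 = 0 := by
  have hc : ContinuousAt g 0 := hg.continuous.continuousAt
  have h1 : g 0 ≤ 0 := by
    have ht : Filter.Tendsto g (nhdsWithin 0 (Set.Ioi 0)) (nhds (g 0)) :=
      (hc.continuousWithinAt).tendsto
    refine le_of_tendsto ht ?_
    exact Filter.eventually_of_mem self_mem_nhdsWithin fun x hx => g_nonpos hsign hx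
  have h2 : 0 ≤ g 0 := by
    have ht : Filter.Tendsto g (nhdsWithin 0 (Set.Iio 0)) (nhds (g 0)) :=
      (hc.continuousWithinAt).tendsto
    refine ge_of_tendsto ht ?_
    exact Filter.eventually_of_mem self_mem_nhdsWithin fun x hx => g_nonneg hsign hx
  linarith

lemma g_odd (hF : Assumption2 F) (hg : Differentiable ℝ g)
    (hode : ∀ x : ℝ, deriv g x = a * x ^ 2 - bF - F (g x))
    (hsign : ∀ x : ℝ, x * g x ≤ 0) : ∀ x : ℝ, g (-x) = -g x := by
  set D : ℝ → ℝ := fun x => g x + g (-x) with hD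
  have hDeven : ∀ x, D (-x) = D x := by intro x; simp only [hD, neg_neg]; ring
  have h0 : D 0 = 0 := by simp [hD, g_zero hg hsign]
  -- suffices: D = 0 on [0, b] for every b
  suffices hsuff : ∀ b : ℝ, 0 ≤ b → ∀ x ∈ Set.Icc 0 b, D x = 0 by
    intro x
    have : D x = 0 := by
      rcases le_total 0 x with h | h
      · exact hsuff x h x ⟨h, le_refl x⟩
      · rw [← hDeven x]; exact hsuff (-x) (by linarith) (-x) ⟨by linarith, le_refl _⟩
    simp only [hD] at this
    linarith
  intro b hb
  -- bound on |g| over [-b, b]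
  obtain ⟨R, hR⟩ := (isCompact_Icc : IsCompact (Set.Icc (-b) b)).exists_bound_of_continuousOn
    hg.continuous.continuousOn
  set R' : ℝ := max R 0 with hR'
  have hgR : ∀ x ∈ Set.Icc (-b) b, |g x| ≤ R' := fun x hx =>
    le_trans (hR x hx) (le_max_left _ _)
  set K : ℝ := deriv F R' with hK
  -- derivative of D
  have hDd : ∀ x : ℝ, HasDerivAt D (F (g (-x)) - F (g x)) x := by
    intro x
    have h1 : HasDerivAt g (deriv g x) x := (hg x).hasDerivAt
    have h2 : HasDerivAt (fun y => g (-y)) (-(deriv g (-x))) x := by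
      have := ((hg (-x)).hasDerivAt).comp x ((hasDerivAt_id x).neg)
      simpa [mul_comm, Function.comp_def] using this
    have h3 := h1.add h2
    have he : deriv g x + -(deriv g (-x)) = F (g (-x)) - F (g x) := by
      rw [hode x, hode (-x)]; ring_nf
    rwa [he] at h3
  have key := norm_le_gronwallBound_of_norm_deriv_right_le
    (f := D) (f' := fun x => F (g (-x)) - F (g x)) (δ := 0) (K := K) (ε := 0) (a := 0) (b := b)
    (ContinuousOn.add hg.continuous.continuousOn
      ((hg.continuous.comp continuous_neg).continuousOn))
    (fun x _ => (hDd x).hasDerivWithinAt)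
    (by simp [h0])
    ?_
  · intro x hx
    have := key x hx
    rw [gronwallBound_ε0] at this
    simp only [zero_mul, Real.norm_eq_abs] at this
    exact abs_eq_zero.1 (le_antisymm this (abs_nonneg _))
  · intro x hx
    have hx1 : x ∈ Set.Icc (-b) b := ⟨by linarith [hx.1], le_of_lt hx.2⟩
    have hx2 : -x ∈ Set.Icc (-b) b := ⟨by linarith [hx.2], by linarith [hx.1]⟩
    have hb1 : |g x| ≤ R' := hgR x hx1
    have hb2 : |g (-x)| ≤ R' := hgR (-x) hx2
    have hb2' : |(-(g (-x)))| ≤ R' := by rwa [abs_neg]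
    have hlip : |F (-(g (-x))) - F (g x)| ≤ K * |(-(g (-x))) - g x| :=
      F_lip hF (le_max_right R 0) hb2' hb1
    rw [hF.even] at hlip
    simp only [Real.norm_eq_abs, add_zero]
    calc |F (g (-x)) - F (g x)| ≤ K * |(-(g (-x))) - g x| := hlip
      _ = K * |g x + g (-x)| := by rw [← abs_neg]; ring_nf
      _ ≤ K * |D x| := le_of_eq rfl

end ODE
end Aux12

namespace Aux12
variable {F Finv : ℝ → ℝ} {a bF : ℝ} {g : ℝ → ℝ}

lemma deriv_g_zero_nonpos (hg : Differentiable ℝ g) (hsign : ∀ x : ℝ, x * g x ≤ 0) :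
    deriv g 0 ≤ 0 := by
  have hd : HasDerivAt g (deriv g 0) 0 := (hg 0).hasDerivAt
  have hs := hasDerivAt_iff_tendsto_slope.1 hd
  refine le_of_tendsto hs ?_
  refine Filter.eventually_of_mem self_mem_nhdsWithin fun x hx => ?_
  have hx0 : x ≠ 0 := by simpa using hx
  have hsl : slope g 0 x = g x / x := by
    simp [slope, g_zero hg hsign, div_eq_inv_mul]
  rw [hsl]
  rcases lt_or_gt_of_ne hx0 with h | h
  · exact div_nonpos_of_nonneg_of_nonpos (g_nonneg hsign h) h.le
  · exact div_nonpos_of_nonpos_of_nonneg (g_nonpos hsign h) h.le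

lemma bF_nonneg (hF : Assumption2 F) (hg : Differentiable ℝ g)
    (hode : ∀ x : ℝ, deriv g x = a * x ^ 2 - bF - F (g x))
    (hsign : ∀ x : ℝ, x * g x ≤ 0) : 0 ≤ bF := by
  have h := hode 0
  rw [g_zero hg hsign, hF.map_zero] at h
  have := deriv_g_zero_nonpos hg hsign
  rw [h] at this
  linarith

/-- deriv g ≤ 0 everywhere. -/
lemma deriv_g_nonpos (hF : Assumption2 F) (ha : 0 < a) (hg : Differentiable ℝ g)
    (hode : ∀ x : ℝ, deriv g x = a * x ^ 2 - bF - F (g x))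
    (hsign : ∀ x : ℝ, x * g x ≤ 0) : ∀ x : ℝ, deriv g x ≤ 0 := by
  have hφc : Continuous (deriv g) := by
    have heq : deriv g = fun x => a * x ^ 2 - bF - F (g x) := funext hode
    rw [heq]
    exact (((continuous_const.mul (continuous_pow 2)).sub continuous_const).sub
      (hF.diff.continuous.comp hg.continuous))
  have hφd : ∀ x : ℝ, HasDerivAt (deriv g) (2 * a * x - deriv F (g x) * deriv g x) x := by
    intro x
    have h1 : HasDerivAt (fun x : ℝ => a * x ^ 2 - bF) (2 * a * x) x := by
      have h := ((hasDerivAt_pow 2 x).const_mul a).sub_const bF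
      exact h.congr_deriv (by norm_num; ring)
    have h2 : HasDerivAt (fun x => F (g x)) (deriv F (g x) * deriv g x) x := by
      have := ((hF.diff (g x)).hasDerivAt).comp x ((hg x).hasDerivAt)
      simpa [Function.comp_def] using this
    have key : HasDerivAt (fun x => a * x ^ 2 - bF - F (g x))
        (2 * a * x - deriv F (g x) * deriv g x) x := h1.sub h2
    exact key.congr_of_eventuallyEq (Filter.Eventually.of_forall hode)
  -- main claim on [0, ∞)
  have main : ∀ x : ℝ, 0 ≤ x → deriv g x ≤ 0 := by
    intro x₀ hx₀
    by_contra hcon0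
    push_neg at hcon0
    obtain ⟨c, hc', hcpos⟩ : ∃ c : ℝ, c = deriv g x₀ ∧ 0 < c := ⟨deriv g x₀, rfl, hcon0⟩
    have hx₀pos : 0 < x₀ := by
      rcases eq_or_lt_of_le hx₀ with h | h
      · exfalso
        have h0 : deriv g x₀ ≤ 0 := by rw [← h]; exact deriv_g_zero_nonpos hg hsign
        linarith [hc' ▸ hcpos]
      · exact h
    -- deriv g > c/2 on [x₀, ∞)
    have hstay : ∀ x : ℝ, x₀ ≤ x → c / 2 < deriv g x := by
      intro x hx
      by_contra hcon
      push_neg at hcon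
      have hSne : {y : ℝ | x₀ ≤ y ∧ deriv g y ≤ c / 2}.Nonempty := ⟨x, hx, hcon⟩
      have hSbdd : BddBelow {y : ℝ | x₀ ≤ y ∧ deriv g y ≤ c / 2} := ⟨x₀, fun y hy => hy.1⟩
      have hSclosed : IsClosed {y : ℝ | x₀ ≤ y ∧ deriv g y ≤ c / 2} := by
        have heq2 : {y : ℝ | x₀ ≤ y ∧ deriv g y ≤ c / 2}
            = Set.Ici x₀ ∩ deriv g ⁻¹' (Set.Iic (c / 2)) := by
          ext y; simp [Set.mem_Ici, Set.mem_Iic]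
        rw [heq2]
        exact isClosed_Ici.inter (IsClosed.preimage hφc isClosed_Iic)
      have hTS : sInf {y : ℝ | x₀ ≤ y ∧ deriv g y ≤ c / 2} ∈
          {y : ℝ | x₀ ≤ y ∧ deriv g y ≤ c / 2} := hSclosed.csInf_mem hSne hSbdd
      set T := sInf {y : ℝ | x₀ ≤ y ∧ deriv g y ≤ c / 2} with hT
      have hTx₀ : x₀ < T := by
        rcases eq_or_lt_of_le hTS.1 with h | h
        · exfalso
          have := hTS.2
          rw [← h] at this
          rw [hc'] at hcpos
          linarith
        · exact h
      have hbelow : ∀ y : ℝ, x₀ ≤ y → y < T → c / 2 < deriv g y := by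
        intro y hy1 hy2
        by_contra hcon2
        push_neg at hcon2
        exact absurd (csInf_le hSbdd ⟨hy1, hcon2⟩) (not_le.2 hy2)
      have hmono : MonotoneOn (deriv g) (Set.Icc x₀ T) := by
        apply monotoneOn_of_deriv_nonneg (convex_Icc _ _) hφc.continuousOn
        · intro y _
          exact ((hφd y).differentiableAt).differentiableWithinAt
        · intro y hy
          rw [interior_Icc] at hy
          rw [(hφd y).deriv]
          have hy0 : 0 < y := lt_trans hx₀pos hy.1
          have hgy : g y ≤ 0 := g_nonpos hsign hy0
          have hFg : deriv F (g y) ≤ 0 := derivF_nonpos hF hgy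
          have hφy : 0 < deriv g y := lt_trans (by positivity) (hbelow y hy.1.le hy.2)
          nlinarith
      have hmm := hmono (Set.left_mem_Icc.2 hTx₀.le) (Set.right_mem_Icc.2 hTx₀.le) hTx₀.le
      rw [← hc'] at hmm
      linarith [hTS.2]
    -- linear growth contradiction
    have hgrow : MonotoneOn (fun x => g x - c / 2 * (x - x₀)) (Set.Ici x₀) := by
      apply monotoneOn_of_deriv_nonneg (convex_Ici _)
      · exact (hg.continuous.continuousOn.sub
          ((continuous_const.mul (continuous_id.sub continuous_const)).continuousOn))
      · intro y _
        exact ((hg y).sub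
          (((differentiable_const (c/2)).mul
            (differentiable_id.sub (differentiable_const x₀))) y)).differentiableWithinAt
      · intro y hy
        rw [interior_Ici, Set.mem_Ioi] at hy
        have hd : HasDerivAt (fun x => g x - c / 2 * (x - x₀)) (deriv g y - c / 2) y := by
          have h2 : HasDerivAt (fun x : ℝ => c / 2 * (x - x₀)) (c / 2) y := by
            simpa using ((hasDerivAt_id y).sub_const x₀).const_mul (c / 2)
          exact ((hg y).hasDerivAt).sub h2
        rw [hd.deriv]
        linarith [hstay y hy.le]
    have hgx₀ : g x₀ ≤ 0 := g_nonpos hsign hx₀pos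
    have hdivpos : 0 < 2 * (1 - g x₀) / c := div_pos (by linarith) hcpos
    have hxbig_ge : x₀ ≤ x₀ + 2 * (1 - g x₀) / c := by linarith
    have hgx := hgrow (Set.self_mem_Ici) (Set.mem_Ici.2 hxbig_ge) hxbig_ge
    simp only [sub_self, mul_zero, sub_zero] at hgx
    have hsimp : c / 2 * (x₀ + 2 * (1 - g x₀) / c - x₀) = 1 - g x₀ := by
      field_simp
      ring
    rw [hsimp] at hgx
    have hneg : g (x₀ + 2 * (1 - g x₀) / c) ≤ 0 := g_nonpos hsign (by linarith)
    linarith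
  intro x
  rcases le_total 0 x with h | h
  · exact main x h
  · have hodd := g_odd hF hg hode hsign
    have hgneg : (fun y => g (-y)) = fun y => -g y := funext hodd
    have h1 : deriv (fun y => g (-y)) x = -deriv g (-x) := deriv_comp_neg g x
    rw [hgneg] at h1
    have h2 : deriv (fun y => -g y) x = -deriv g x := by
      simpa using ((hg x).hasDerivAt.neg).deriv
    rw [h2] at h1
    have h3 : deriv g (-x) = deriv g x := by linarith
    rw [← h3]
    exact main (-x) (by linarith)

end Aux12

namespace Aux12
variable {F Finv : ℝ → ℝ} {a bF : ℝ} {g : ℝ → ℝ}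

lemma F_g_lower (hF : Assumption2 F) (ha : 0 < a) (hg : Differentiable ℝ g)
    (hode : ∀ x : ℝ, deriv g x = a * x ^ 2 - bF - F (g x))
    (hsign : ∀ x : ℝ, x * g x ≤ 0) (x : ℝ) : a * x ^ 2 - bF ≤ F (-g x) := by
  have h1 := deriv_g_nonpos hF ha hg hode hsign x
  rw [hode x] at h1
  have h2 : F (-g x) = F (g x) := hF.even (g x)
  linarith

set_option maxHeartbeats 1600000 in
lemma F_g_upper (hF : Assumption2 F) (hI : IsInvOn F Finv) (ha : 0 < a)
    (hg : Differentiable ℝ g)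
    (hode : ∀ x : ℝ, deriv g x = a * x ^ 2 - bF - F (g x))
    (hsign : ∀ x : ℝ, x * g x ≤ 0) {ε : ℝ} (hε0 : 0 < ε) (hε1 : ε ≤ 1) :
    ∃ X : ℝ, 1 ≤ X ∧ ∀ x : ℝ, X ≤ x → F (-g x) ≤ (1 + ε) * (a * x ^ 2) + 2 * bF + 1 := by
  obtain ⟨κ, hκ, M, hM, hquad⟩ := F_quad_lb hF
  have hbF : 0 ≤ bF := bF_nonneg hF hg hode hsign
  have hdnp := deriv_g_nonpos hF ha hg hode hsign
  have hanti : Antitone g := antitone_of_deriv_nonpos hg hdnp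
  set N : ℝ := max (max (Real.sqrt (2 * M / κ)) (64 / (ε ^ 2 * κ) + 1)) 1 with hN
  have hN1 : (1:ℝ) ≤ N := le_max_right _ _
  -- a x² - bF → ∞
  have hq : Filter.Tendsto (fun x : ℝ => a * x ^ 2 - bF) Filter.atTop Filter.atTop := by
    apply Filter.tendsto_atTop_add_const_right
    exact (Filter.tendsto_pow_atTop (two_ne_zero)).const_mul_atTop ha
  have hFq : Filter.Tendsto (fun x : ℝ => Finv (a * x ^ 2 - bF)) Filter.atTop Filter.atTop :=
    (Finv_tendsto_atTop hF hI).comp hq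
  have hev : ∀ᶠ x : ℝ in Filter.atTop,
      N ≤ Finv (a * x ^ 2 - bF) ∧ 0 ≤ a * x ^ 2 - bF ∧ 1 ≤ x := by
    filter_upwards [hFq.eventually_ge_atTop N, hq.eventually_ge_atTop 0,
      Filter.eventually_ge_atTop (1:ℝ)] with x h1 h2 h3
    exact ⟨h1, h2, h3⟩
  obtain ⟨X, hX⟩ := Filter.eventually_atTop.1 hev
  refine ⟨max X 1, le_max_right _ _, fun x₁ hx₁ => ?_⟩
  obtain ⟨hN', hpos', hx₁1⟩ := hX x₁ (le_trans (le_max_left _ _) hx₁)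
  by_contra hV
  push_neg at hV
  -- u := -g ; u₁ := -g x₁
  have hgx₁ : g x₁ ≤ 0 := g_nonpos hsign (by linarith)
  have hu₁0 : 0 ≤ -g x₁ := by linarith
  have hu₁N : N ≤ -g x₁ :=
    le_trans hN' (Finv_le_of_le_F hF hI hu₁0 hpos' (F_g_lower hF ha hg hode hsign x₁))
  have hu₁1 : (1:ℝ) ≤ -g x₁ := le_trans hN1 hu₁N
  have hu₁sq : 2 * M ≤ κ * (-g x₁) ^ 2 := by
    have h1 : Real.sqrt (2 * M / κ) ≤ -g x₁ :=
      le_trans (le_trans (le_max_left _ _) (le_max_left _ _)) hu₁N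
    have h2 : 2 * M / κ ≤ (-g x₁) ^ 2 := by
      have := Real.sq_sqrt (by positivity : (0:ℝ) ≤ 2 * M / κ)
      nlinarith [Real.sqrt_nonneg (2 * M / κ)]
    calc 2 * M = κ * (2 * M / κ) := by field_simp
      _ ≤ κ * (-g x₁) ^ 2 := by nlinarith
  have hu₁64 : 64 / (ε ^ 2 * κ) < -g x₁ :=
    lt_of_lt_of_le (by linarith)
      (le_trans (le_trans (le_max_right _ _) (le_max_left _ _)) hu₁N)
  set δ : ℝ := ε * x₁ / 8 with hδ
  have hδpos : 0 < δ := by positivity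
  -- properties on J = [x₁, x₁ + δ]
  have humono : ∀ x : ℝ, x₁ ≤ x → -g x₁ ≤ -g x := fun x hx => neg_le_neg (hanti hx)
  have hupos : ∀ x : ℝ, x₁ ≤ x → 0 < -g x := fun x hx => lt_of_lt_of_le
    (by linarith) (humono x hx)
  have hFmono : ∀ x : ℝ, x₁ ≤ x → F (-g x₁) ≤ F (-g x) := fun x hx =>
    F_monoOn hF (Set.mem_Ici.2 hu₁0) (Set.mem_Ici.2 (le_of_lt (hupos x hx))) (humono x hx)
  -- the quantitative derivative bound on J
  have hderiv_u : ∀ x : ℝ, HasDerivAt (fun y => -g y) (F (-g x) + bF - a * x ^ 2) x := by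
    intro x
    have h1 : HasDerivAt (fun y => -g y) (-deriv g x) x := ((hg x).hasDerivAt).neg
    have h2 : -deriv g x = F (-g x) + bF - a * x ^ 2 := by
      rw [hode x, ← neg_neg (g x), hF.even]
      ring
    rwa [h2] at h1
  have hkey : ∀ x : ℝ, x₁ ≤ x → x ≤ x₁ + δ →
      ε * κ / 8 * (-g x) ^ 2 ≤ F (-g x) + bF - a * x ^ 2 := by
    intro x hx hxδ
    have hFx := hFmono x hx
    have h3ε : a * x ^ 2 ≤ (1 + 3 * ε / 8) * (a * x₁ ^ 2) := by
      have hx0 : (0:ℝ) < x₁ := by linarith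
      have h1 : x ^ 2 ≤ (x₁ + δ) ^ 2 := by nlinarith
      have h2 : (x₁ + δ) ^ 2 ≤ (1 + 3 * ε / 8) * x₁ ^ 2 := by
        rw [hδ]
        nlinarith [mul_nonneg (mul_nonneg hε0.le (by linarith : (0:ℝ) ≤ 8 - ε)) (sq_nonneg x₁)]
      nlinarith
    have hax₁ : 0 ≤ a * x₁ ^ 2 := by positivity
    have h45 : (0:ℝ) ≤ 1 - ε / 4 := by linarith
    have hstep : (1 + 3 * ε / 8) * (a * x₁ ^ 2) ≤ (1 - ε / 4) * F (-g x₁) := by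
      nlinarith [mul_le_mul_of_nonneg_left (le_of_lt hV) h45,
        mul_nonneg (mul_nonneg hε0.le (by linarith : (0:ℝ) ≤ 3 - 2 * ε)) hax₁]
    have h6 : a * x ^ 2 ≤ (1 - ε / 4) * F (-g x) := by
      have := mul_le_mul_of_nonneg_left hFx h45
      linarith
    have h7 : ε / 4 * F (-g x) ≤ F (-g x) + bF - a * x ^ 2 := by linarith
    have h8 : κ * (-g x) ^ 2 - M ≤ F (-g x) := hquad _ (le_of_lt (hupos x hx))
    have h9 : 2 * M ≤ κ * (-g x) ^ 2 := by
      have h91 := humono x hx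
      have hsq : (-g x₁) ^ 2 ≤ (-g x) ^ 2 := by nlinarith
      nlinarith [mul_le_mul_of_nonneg_left hsq hκ.le]
    nlinarith [mul_le_mul_of_nonneg_left h8 (by positivity : (0:ℝ) ≤ ε/4),
      mul_le_mul_of_nonneg_left h9 (by positivity : (0:ℝ) ≤ ε/8)]
  -- w := 1/u + (εκ/8) x is antitone on J
  have hwanti : AntitoneOn (fun x => 1 / (-g x) + ε * κ / 8 * x) (Set.Icc x₁ (x₁ + δ)) := by
    apply antitoneOn_of_deriv_nonpos (convex_Icc _ _)
    · apply ContinuousOn.add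
      · apply ContinuousOn.div continuousOn_const
          (hg.continuous.neg.continuousOn)
        intro x hx
        exact ne_of_gt (hupos x hx.1)
      · exact (continuous_const.mul continuous_id).continuousOn
    · intro x hx
      rw [interior_Icc] at hx
      apply DifferentiableWithinAt.add
      · exact (((differentiable_const (1:ℝ)) x).div ((hg x).neg)
          (ne_of_gt (hupos x hx.1.le))).differentiableWithinAt
      · exact (((differentiable_const (ε * κ / 8)).mul differentiable_id) x).differentiableWithinAt
    · intro x hx
      rw [interior_Icc] at hx
      have hne : -g x ≠ 0 := ne_of_gt (hupos x hx.1.le)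
      have hd1 : HasDerivAt (fun y => 1 / (-g y))
          (-(F (-g x) + bF - a * x ^ 2) / (-g x) ^ 2) x := by
        have := (hasDerivAt_const x (1:ℝ)).div (hderiv_u x) hne
        simpa [Pi.div_def] using this
      have hd2 : HasDerivAt (fun y => 1 / (-g y) + ε * κ / 8 * y)
          (-(F (-g x) + bF - a * x ^ 2) / (-g x) ^ 2 + ε * κ / 8) x := by
        have h2 : HasDerivAt (fun y : ℝ => ε * κ / 8 * y) (ε * κ / 8) x := by
          simpa using (hasDerivAt_id x).const_mul (ε * κ / 8)
        exact hd1.add h2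
      rw [hd2.deriv]
      have hk := hkey x hx.1.le hx.2.le
      have hsq : 0 < (-g x) ^ 2 := by positivity
      rw [div_add' _ _ _ (ne_of_gt hsq)]
      apply div_nonpos_of_nonpos_of_nonneg _ (le_of_lt hsq)
      nlinarith
  -- conclude contradiction
  have hw := hwanti (Set.left_mem_Icc.2 (by linarith)) (Set.right_mem_Icc.2 (by linarith))
    (by linarith)
  have hu2pos : 0 < -g (x₁ + δ) := hupos _ (by linarith)
  have hinv1 : 1 / (-g x₁) < ε ^ 2 * κ / 64 := by
    rw [div_lt_iff₀ (by linarith)]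
    rw [div_lt_iff₀ (by positivity)] at hu₁64
    nlinarith
  have hslack : ε ^ 2 * κ / 64 ≤ ε * κ / 8 * δ := by
    rw [hδ]
    have h := mul_le_mul_of_nonneg_left hx₁1 (by positivity : (0:ℝ) ≤ ε ^ 2 * κ / 64)
    nlinarith [h]
  have : 1 / (-g (x₁ + δ)) < 0 := by
    have := hw
    simp only at this
    nlinarith
  have : (0:ℝ) < 1 / (-g (x₁ + δ)) := by positivity
  linarith

end Aux12

namespace Aux12
variable {F Finv : ℝ → ℝ} {a bF : ℝ} {g : ℝ → ℝ}

set_option maxHeartbeats 1600000 in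
lemma ratio_tendsto (hF : Assumption2 F) (hI : IsInvOn F Finv) (ha : 0 < a)
    (hg : Differentiable ℝ g)
    (hode : ∀ x : ℝ, deriv g x = a * x ^ 2 - bF - F (g x))
    (hsign : ∀ x : ℝ, x * g x ≤ 0) :
    Filter.Tendsto (fun x => -g x / Finv (a * x ^ 2)) Filter.atTop (nhds 1) := by
  have hbF : 0 ≤ bF := bF_nonneg hF hg hode hsign
  rw [Metric.tendsto_atTop]
  intro ε' hε'
  set ε : ℝ := min (ε' / 4) 1 with hε
  have hε0 : 0 < ε := lt_min (by linarith) one_pos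
  have hε1 : ε ≤ 1 := min_le_right _ _
  have hε4 : ε ≤ ε' / 4 := min_le_left _ _
  obtain ⟨X, hX1, hXub⟩ := F_g_upper hF hI ha hg hode hsign hε0 hε1
  -- a x² → ∞ hence Finv (a x²) → ∞
  have hq : Filter.Tendsto (fun x : ℝ => a * x ^ 2) Filter.atTop Filter.atTop :=
    (Filter.tendsto_pow_atTop (two_ne_zero)).const_mul_atTop ha
  have hFq : Filter.Tendsto (fun x : ℝ => Finv (a * x ^ 2)) Filter.atTop Filter.atTop :=
    (Finv_tendsto_atTop hF hI).comp hq
  have hev : ∀ᶠ x : ℝ in Filter.atTop,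
      (X ≤ x ∧ bF + 1 ≤ a * x ^ 2) ∧
      (1 ≤ Finv (a * x ^ 2) ∧ Finv bF ≤ ε * Finv (a * x ^ 2)) ∧
      Finv (2 * bF + 1) ≤ ε * Finv (a * x ^ 2) := by
    filter_upwards [Filter.eventually_ge_atTop X, hq.eventually_ge_atTop (bF + 1),
      hFq.eventually_ge_atTop 1, hFq.eventually_ge_atTop (Finv bF / ε),
      hFq.eventually_ge_atTop (Finv (2 * bF + 1) / ε)] with x h1 h2 h3 h4 h5
    refine ⟨⟨h1, h2⟩, ⟨h3, ?_⟩, ?_⟩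
    · rw [div_le_iff₀ hε0] at h4; linarith [h4]
    · rw [div_le_iff₀ hε0] at h5; linarith [h5]
  obtain ⟨Y, hY⟩ := Filter.eventually_atTop.1 hev
  refine ⟨max Y 1, fun x hx => ?_⟩
  obtain ⟨⟨hxX, hxq⟩, ⟨hD1, hDb⟩, hDb2⟩ := hY x (le_trans (le_max_left _ _) hx)
  have hx1 : (1:ℝ) ≤ x := le_trans (le_max_right _ _) hx
  have hDpos : 0 < Finv (a * x ^ 2) := lt_of_lt_of_le one_pos hD1
  have hgx : g x ≤ 0 := g_nonpos hsign (by linarith)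
  have hu0 : 0 ≤ -g x := by linarith
  have hax2 : 0 ≤ a * x ^ 2 := by positivity
  -- lower bound
  have hlow : 1 - ε ≤ -g x / Finv (a * x ^ 2) := by
    have h1 : Finv (a * x ^ 2 - bF) ≤ -g x :=
      Finv_le_of_le_F hF hI hu0 (by linarith) (F_g_lower hF ha hg hode hsign x)
    have h2 : Finv (a * x ^ 2) ≤ Finv (a * x ^ 2 - bF) + Finv bF := by
      have h3 := Finv_subadd hF hI (by linarith : (0:ℝ) ≤ a * x ^ 2 - bF) hbF
      have h4 : a * x ^ 2 - bF + bF = a * x ^ 2 := by ring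
      rwa [h4] at h3
    rw [le_div_iff₀ hDpos]
    nlinarith
  -- upper bound
  have hup : -g x / Finv (a * x ^ 2) ≤ 1 + 2 * ε := by
    have h1 : F (-g x) ≤ (1 + ε) * (a * x ^ 2) + (2 * bF + 1) := by
      have := hXub x hxX
      linarith
    have h2 : -g x ≤ Finv ((1 + ε) * (a * x ^ 2) + (2 * bF + 1)) :=
      le_Finv_of_F_le hF hI hu0 (by nlinarith) h1
    have h3 : Finv ((1 + ε) * (a * x ^ 2) + (2 * bF + 1))
        ≤ Finv ((1 + ε) * (a * x ^ 2)) + Finv (2 * bF + 1) :=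
      Finv_subadd hF hI (by nlinarith) (by linarith)
    have h4 : Finv ((1 + ε) * (a * x ^ 2)) ≤ (1 + ε) * Finv (a * x ^ 2) :=
      Finv_scale hF hI hax2 (by linarith)
    rw [div_le_iff₀ hDpos]
    nlinarith
  rw [Real.dist_eq]
  have habs : |(-g x / Finv (a * x ^ 2)) - 1| ≤ 2 * ε := abs_le.2 ⟨by linarith, by linarith⟩
  calc |(-g x / Finv (a * x ^ 2)) - 1| ≤ 2 * ε := habs
    _ < ε' := by linarith

end Aux12


open Aux12 in
/-- Lemma A.5 (properties): the unique solution `g` on `ℝ` of `g' = a·x² − b_F − F(g)` with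
`x·g(x) ≤ 0` is odd, decreasing, and satisfies `g(x)/F⁻¹(a·x²) → 1` as `x → −∞` and
`g(x)/F⁻¹(a·x²) → −1` as `x → +∞`. -/
theorem stmt12 (F Finv : ℝ → ℝ) (hF : Assumption2 F) (hInv : IsInvOn F Finv)
    (a bF : ℝ) (ha : 0 < a) (g : ℝ → ℝ)
    (hg : Differentiable ℝ g)
    (hode : ∀ x : ℝ, deriv g x = a * x ^ 2 - bF - F (g x))
    (hsign : ∀ x : ℝ, x * g x ≤ 0) :
    (∀ x : ℝ, g (-x) = -g x) ∧ Antitone g ∧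
    Filter.Tendsto (fun x => g x / Finv (a * x ^ 2)) Filter.atBot (nhds 1) ∧
    Filter.Tendsto (fun x => g x / Finv (a * x ^ 2)) Filter.atTop (nhds (-1)) := by
  have hodd := g_odd hF hg hode hsign
  have hanti : Antitone g := antitone_of_deriv_nonpos hg (deriv_g_nonpos hF ha hg hode hsign)
  have hratio := ratio_tendsto hF hInv ha hg hode hsign
  have hTop : Filter.Tendsto (fun x => g x / Finv (a * x ^ 2)) Filter.atTop (nhds (-1)) := by
    have h := hratio.neg
    simp only [neg_div, neg_neg] at h
    simpa using h
  have hBot : Filter.Tendsto (fun x => g x / Finv (a * x ^ 2)) Filter.atBot (nhds 1) := by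
    have h := hTop.comp Filter.tendsto_neg_atBot_atTop
    have heq : ((fun x => g x / Finv (a * x ^ 2)) ∘ fun x : ℝ => -x)
        = fun x => -(g x / Finv (a * x ^ 2)) := by
      funext x
      simp only [Function.comp_apply, hodd x, neg_sq, neg_div]
    rw [heq] at h
    have h2 := h.neg
    simpa using h2
  exact ⟨hodd, hanti, hBot, hTop⟩
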